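/- Let Q be a quiver, θ ∈ ℤ^{Q0} a weight, and let Q^1,…,Q^t be the maximal subquivers of Q containing no oriented cycles (i.e., the subquivers with vertex set Q0 whose arrow sets are maximal among subsets of Q1 containing no oriented cycle), with ∇(Q^i,θ) regarded as a subset of ℝ^{Q1} via extension by zero. Then the set of lattice points of ∇(Q,θ) has the Minkowski sum decomposition ∇(Q,θ) ∩ ℤ^{Q1} = (∇(Q,0) ∩ ℤ^{Q1}) + ⋃_{i=1}^{t} (∇(Q^i,θ) ∩ ℤ^{Q1}), i.e., it equals {m + n : m ∈ ∇(Q,0) ∩ ℤ^{Q1}, n ∈ ∇(Q^i,θ) ∩ ℤ^{Q1} for some i}. -/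

import Mathlib

/-- The flow map of a quiver with arrow set `A`, vertex set `V`, source map `s`
and target map `t`. -/
def flowMap {V A : Type} [Fintype A] [DecidableEq V] (s t : A → V) (x : A → ℝ) (v : V) : ℝ :=
  (∑ a : A, if t a = v then x a else 0) - (∑ a : A, if s a = v then x a else 0)

/-- The quiver polyhedron `∇(Q,θ)`. -/
def quiverPolyhedron {V A : Type} [Fintype A] [DecidableEq V] (s t : A → V) (θ : V → ℤ) :
    Set (A → ℝ) :=
  {x | (∀ a, 0 ≤ x a) ∧ ∀ v, flowMap s t x v = (θ v : ℝ)}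

/-- A point of `ℝ^A` is a lattice point if all its coordinates are integers. -/
def IsLatticePt {A : Type} (x : A → ℝ) : Prop := ∀ a, ∃ z : ℤ, x a = (z : ℝ)

/-- Integral-affine equivalence of lattice polyhedra. -/
def IntegralAffinelyEquivalent {A B : Type}
    (P : Set (A → ℝ)) (Q : Set (B → ℝ)) : Prop :=
  ∃ (φ : (A → ℝ) →ᵃ[ℝ] (B → ℝ)) (ψ : (B → ℝ) →ᵃ[ℝ] (A → ℝ)),
    (∀ x ∈ affineSpan ℝ P, ψ (φ x) = x) ∧
    (∀ y ∈ affineSpan ℝ Q, φ (ψ y) = y) ∧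
    φ '' (affineSpan ℝ P : Set (A → ℝ)) = (affineSpan ℝ Q : Set (B → ℝ)) ∧
    φ '' ((affineSpan ℝ P : Set (A → ℝ)) ∩ {x | IsLatticePt x}) =
      (affineSpan ℝ Q : Set (B → ℝ)) ∩ {y | IsLatticePt y} ∧
    φ '' P = Q

/-- The quiver has an oriented cycle. -/
def HasOrientedCycle {V A : Type} (s t : A → V) : Prop :=
  ∃ (n : ℕ) (f : Fin (n + 1) → A), ∀ i : Fin (n + 1), t (f i) = s (f (i + 1))

/-- The arrow `a` is removable for `(Q,θ)`. -/
def Removable {V A : Type} [Fintype A] [DecidableEq V] [DecidableEq A]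
    (s t : A → V) (θ : V → ℤ) (a : A) : Prop :=
  IntegralAffinelyEquivalent (quiverPolyhedron s t θ)
    (quiverPolyhedron (fun b : {b : A // b ≠ a} => s b.1) (fun b => t b.1) θ)

/-- The non-loop arrow `a` is contractable for `(Q,θ)`. -/
def Contractable {V A : Type} [Fintype A] [DecidableEq V] [DecidableEq A]
    (s t : A → V) (θ : V → ℤ) (a : A) (h : s a ≠ t a) : Prop :=
  IntegralAffinelyEquivalent (quiverPolyhedron s t θ)
    (quiverPolyhedron
      (fun b : {b : A // b ≠ a} =>
        if hb : s b.1 = s a then (⟨t a, Ne.symm h⟩ : {v : V // v ≠ s a}) else ⟨s b.1, hb⟩)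
      (fun b : {b : A // b ≠ a} =>
        if hb : t b.1 = s a then (⟨t a, Ne.symm h⟩ : {v : V // v ≠ s a}) else ⟨t b.1, hb⟩)
      (fun v : {v : V // v ≠ s a} => if v.1 = t a then θ (s a) + θ (t a) else θ v.1))

/-- The pair `(Q,θ)` is tight. -/
def Tight {V A : Type} [Fintype A] [DecidableEq V] [DecidableEq A]
    (s t : A → V) (θ : V → ℤ) : Prop :=
  (quiverPolyhedron s t θ).Nonempty ∧
  (∀ a : A, ¬ Removable s t θ a) ∧
  ∀ (a : A) (h : s a ≠ t a), ¬ Contractable s t θ a h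

/-- The quiver has an oriented cycle all of whose arrows lie in `E`. -/
def HasOrientedCycleIn {V A : Type} (s t : A → V) (E : Set A) : Prop :=
  ∃ (n : ℕ) (f : Fin (n + 1) → A), (∀ i, f i ∈ E) ∧
    ∀ i : Fin (n + 1), t (f i) = s (f (i + 1))

/-- `E` is the arrow set of a maximal subquiver of `Q` (with all the vertices)
containing no oriented cycles. -/
def MaximalAcyclic {V A : Type} (s t : A → V) (E : Set A) : Prop :=
  ¬ HasOrientedCycleIn s t E ∧ ∀ E' : Set A, E ⊆ E' → ¬ HasOrientedCycleIn s t E' → E' = E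

section Aux

variable {V A : Type}

lemma flowMap_add' [Fintype A] [DecidableEq V] (s t : A → V) (x y : A → ℝ) (v : V) :
    flowMap s t (fun a => x a + y a) v = flowMap s t x v + flowMap s t y v := by
  unfold flowMap
  have h1 : ∀ w : A → V, ∑ a : A, (if w a = v then x a + y a else 0) =
      (∑ a : A, if w a = v then x a else 0) + (∑ a : A, if w a = v then y a else 0) := by
    intro w
    rw [← Finset.sum_add_distrib]
    refine Finset.sum_congr rfl fun a _ => ?_
    split <;> simp
  rw [h1, h1]; ring

lemma flowMap_sub' [Fintype A] [DecidableEq V] (s t : A → V) (x y : A → ℝ) (v : V) :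
    flowMap s t (fun a => x a - y a) v = flowMap s t x v - flowMap s t y v := by
  unfold flowMap
  have h1 : ∀ w : A → V, ∑ a : A, (if w a = v then x a - y a else 0) =
      (∑ a : A, if w a = v then x a else 0) - (∑ a : A, if w a = v then y a else 0) := by
    intro w
    rw [← Finset.sum_sub_distrib]
    refine Finset.sum_congr rfl fun a _ => ?_
    split <;> simp
  rw [h1, h1]; ring

lemma cycle_shorten {V A : Type} (s t : A → V) (E : Set A) (n : ℕ) (f : Fin (n + 1) → A)
    (hfE : ∀ i, f i ∈ E) (hft : ∀ i : Fin (n + 1), t (f i) = s (f (i + 1)))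
    (i j : Fin (n + 1)) (hij : f i = f j) (hne : i ≠ j) :
    ∃ m, m < n ∧ ∃ g : Fin (m + 1) → A, (∀ k, g k ∈ E) ∧
      ∀ k : Fin (m + 1), t (g k) = s (g (k + 1)) := by
  have hn0 : 0 < n := by
    rcases Nat.eq_zero_or_pos n with h0 | h0
    · subst h0
      have hi := i.isLt; have hj := j.isLt
      exact absurd (Fin.ext (by omega : i.val = j.val)) hne
    · exact h0
  have hd0 : j - i ≠ 0 := sub_ne_zero.mpr (Ne.symm hne)
  have hd1 : 1 ≤ (j - i).val := by
    rcases Nat.eq_zero_or_pos (j - i).val with h0 | h0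
    · exact absurd (Fin.ext (by simp [h0] : (j - i).val = (0 : Fin (n+1)).val)) hd0
    · exact h0
  have hdn : (j - i).val ≤ n := Nat.lt_succ_iff.mp (j - i).isLt
  refine ⟨(j - i).val - 1, by omega, ?_⟩
  have hm1 : ((j - i).val - 1) + 1 = (j - i).val := by omega
  set m := (j - i).val - 1 with hm
  have hcast : ∀ k : Fin (m + 1), k.val < n + 1 := fun k => by have := k.isLt; omega
  refine ⟨fun k => f (i + ⟨k.val, hcast k⟩), fun k => hfE _, fun k => ?_⟩
  show t (f (i + ⟨k.val, hcast k⟩)) = s (f (i + ⟨(k + 1 : Fin (m+1)).val, hcast (k+1)⟩))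
  by_cases hk : k.val < m
  · -- no wrap-around
    have hklt := k.isLt
    have h1 : ((k + 1 : Fin (m + 1))).val = k.val + 1 :=
      Fin.val_add_one_of_lt
        (by rw [Fin.lt_def, Fin.val_last]; exact hk)
    have e1 : (⟨k.val, hcast k⟩ + 1 : Fin (n + 1)) = ⟨k.val + 1, by omega⟩ :=
      Fin.ext (by
        rw [Fin.val_add_one_of_lt
          (by rw [Fin.lt_def, Fin.val_last]; show k.val < n; omega)])
    have e2 : (i + ⟨(k + 1 : Fin (m+1)).val, hcast (k+1)⟩ : Fin (n + 1)) =
        i + ⟨k.val, hcast k⟩ + 1 := by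
      rw [add_assoc, e1]
      congr 1
      exact Fin.ext (by simp [h1])
    rw [e2]
    exact hft _
  · -- wrap-around step
    have hk' : k.val = m := by have := k.isLt; omega
    have hkl : k = Fin.last m := Fin.ext (by simpa using hk')
    have h1 : (k + 1 : Fin (m + 1)) = 0 := by rw [hkl]; exact Fin.last_add_one m
    have hklt := k.isLt
    have e2 : (⟨k.val, hcast k⟩ + 1 : Fin (n + 1)) = j - i :=
      Fin.ext (by
        rw [Fin.val_add_one_of_lt
          (by rw [Fin.lt_def, Fin.val_last]; show k.val < n; omega)]
        show k.val + 1 = (j - i).val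
        omega)
    have h2 : (i + ⟨k.val, hcast k⟩ : Fin (n + 1)) + 1 = j := by
      rw [add_assoc, e2]
      exact add_sub_cancel i j
    have h3 : (i + ⟨(k + 1 : Fin (m+1)).val, hcast (k+1)⟩ : Fin (n + 1)) = i := by
      have : (⟨(k + 1 : Fin (m+1)).val, hcast (k+1)⟩ : Fin (n + 1)) = 0 :=
        Fin.ext (by show (k + 1 : Fin (m+1)).val = (0 : Fin (n+1)).val; rw [h1]; rfl)
      rw [this, add_zero]
    rw [hft (i + ⟨k.val, hcast k⟩), h2, ← hij, h3]

/-- From any oriented cycle we can extract one with pairwise distinct arrows. -/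
lemma exists_inj_cycle {V A : Type} (s t : A → V) (E : Set A) (h : HasOrientedCycleIn s t E) :
    ∃ (n : ℕ) (f : Fin (n + 1) → A), Function.Injective f ∧ (∀ i, f i ∈ E) ∧
      ∀ i : Fin (n + 1), t (f i) = s (f (i + 1)) := by
  classical
  have hP : ∃ n : ℕ, ∃ f : Fin (n+1) → A, (∀ i, f i ∈ E) ∧
      ∀ i : Fin (n+1), t (f i) = s (f (i + 1)) := h
  obtain ⟨f, hfE, hft⟩ := Nat.find_spec hP
  refine ⟨Nat.find hP, f, ?_, hfE, hft⟩
  intro i j hij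
  by_contra hne
  obtain ⟨m, hmn, hg⟩ := cycle_shorten s t E _ f hfE hft i j hij hne
  exact absurd hg (Nat.find_min hP hmn)

/-- Any acyclic arrow set extends to a maximal acyclic one. -/
lemma exists_maximalAcyclic [Fintype A] (s t : A → V) (E₀ : Set A)
    (h : ¬ HasOrientedCycleIn s t E₀) :
    ∃ E : Set A, E₀ ⊆ E ∧ MaximalAcyclic s t E := by
  classical
  set S : Set (Set A) := {E | E₀ ⊆ E ∧ ¬ HasOrientedCycleIn s t E} with hS
  obtain ⟨E, hES, hmax⟩ := Set.Finite.exists_maximalFor id S (Set.toFinite S)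
    ⟨E₀, subset_rfl, h⟩
  refine ⟨E, hES.1, hES.2, fun E' hEE' hE' => ?_⟩
  exact Set.Subset.antisymm (hmax (j := E') ⟨hES.1.trans hEE', hE'⟩ hEE') hEE'

end Aux

lemma cycle_flow {V A : Type} [Fintype A] [DecidableEq V] [DecidableEq A]
    (s t : A → V) (n : ℕ) (f : Fin (n + 1) → A)
    (hft : ∀ i : Fin (n + 1), t (f i) = s (f (i + 1))) (v : V) :
    flowMap s t (fun a => ∑ i : Fin (n + 1), if f i = a then (1 : ℝ) else 0) v = 0 := by
  unfold flowMap
  have key : ∀ w : A → V,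
      (∑ a : A, if w a = v then (∑ i : Fin (n + 1), if f i = a then (1 : ℝ) else 0) else 0)
        = ∑ i : Fin (n + 1), if w (f i) = v then (1 : ℝ) else 0 := by
    intro w
    have h1 : ∀ a : A,
        (if w a = v then (∑ i : Fin (n + 1), if f i = a then (1 : ℝ) else 0) else 0)
          = ∑ i : Fin (n + 1), if f i = a then (if w a = v then (1 : ℝ) else 0) else 0 := by
      intro a
      split
      · exact Finset.sum_congr rfl fun i _ => by split <;> simp_all
      · exact (Finset.sum_eq_zero fun i _ => by split <;> simp_all).symm
    rw [Finset.sum_congr rfl fun a _ => h1 a, Finset.sum_comm]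
    refine Finset.sum_congr rfl fun i _ => ?_
    rw [Finset.sum_ite_eq Finset.univ (f i) (fun a => if w a = v then (1 : ℝ) else 0)]
    simp
  rw [key t, key s]
  have h2 : (∑ i : Fin (n + 1), if t (f i) = v then (1 : ℝ) else 0)
      = ∑ i : Fin (n + 1), if s (f (i + 1)) = v then (1 : ℝ) else 0 :=
    Finset.sum_congr rfl fun i _ => by rw [hft i]
  rw [h2, Fintype.sum_equiv (Equiv.addRight (1 : Fin (n + 1)))
    (fun i => if s (f (i + 1)) = v then (1 : ℝ) else 0)
    (fun i => if s (f i) = v then (1 : ℝ) else 0) (fun i => rfl), sub_self]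

lemma key_decomp {V A : Type} [Fintype V] [Fintype A] [DecidableEq V] [DecidableEq A]
    (s t : A → V) (θ : V → ℤ) :
    ∀ N : ℕ, ∀ x : A → ℝ, x ∈ quiverPolyhedron s t θ → IsLatticePt x →
      (∑ a : A, x a) ≤ (N : ℝ) →
      ∃ m n : A → ℝ, m ∈ quiverPolyhedron s t (fun _ => 0) ∧ IsLatticePt m ∧
        n ∈ quiverPolyhedron s t θ ∧ IsLatticePt n ∧
        ¬ HasOrientedCycleIn s t {a | n a ≠ 0} ∧ x = fun a => m a + n a := by
  intro N
  induction N using Nat.strong_induction_on with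
  | _ N IH =>
  intro x hx hlat hsum
  by_cases hcyc : HasOrientedCycleIn s t {a | x a ≠ 0}
  case neg =>
    refine ⟨fun _ => 0, x, ⟨fun a => le_refl 0, fun v => by simp [flowMap]⟩,
      fun a => ⟨0, by simp⟩, hx, hlat, hcyc, by funext a; simp⟩
  case pos =>
    obtain ⟨n₀, f, hinj, hfE, hft⟩ := exists_inj_cycle s t _ hcyc
    set c : A → ℝ := fun a => ∑ i : Fin (n₀ + 1), if f i = a then (1 : ℝ) else 0 with hc
    have hcval : ∀ a, c a = ((Finset.univ.filter fun i => f i = a).card : ℝ) := fun a => by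
      show (∑ i : Fin (n₀ + 1), if f i = a then (1 : ℝ) else 0)
        = ((Finset.univ.filter fun i => f i = a).card : ℝ)
      rw [Finset.sum_boole]
    have hcard : ∀ a : A, (Finset.univ.filter fun i => f i = a).card ≤ 1 := by
      intro a
      refine Finset.card_le_one.mpr fun b hb c' hc' => ?_
      simp only [Finset.mem_filter] at hb hc'
      exact hinj (hb.2.trans hc'.2.symm)
    have hc01 : ∀ a, c a = 0 ∨ c a = 1 := by
      intro a
      rw [hcval a]
      rcases Nat.le_one_iff_eq_zero_or_eq_one.mp (hcard a) with h | h <;> simp [h]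
    have hc0le : ∀ a, 0 ≤ c a := fun a => by rcases hc01 a with h | h <;> simp [h]
    have hcr : ∀ a, c a ≠ 0 → x a ≠ 0 := by
      intro a ha
      have hex : ∃ i, f i = a := by
        by_contra hno
        push_neg at hno
        exact ha (by rw [hc]; exact Finset.sum_eq_zero fun i _ => by simp [hno i])
      obtain ⟨i, hi⟩ := hex
      exact hi ▸ hfE i
    have hx1 : ∀ a, c a ≠ 0 → 1 ≤ x a := by
      intro a ha
      obtain ⟨z, hz⟩ := hlat a
      have h0 := hx.1 a
      have hne := hcr a ha
      rw [hz] at h0 hne ⊢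
      have hz0 : (0 : ℤ) < z := by
        have h0' : (0 : ℤ) ≤ z := by exact_mod_cast h0
        have hne' : z ≠ 0 := by exact_mod_cast hne
        omega
      exact_mod_cast hz0
    have hcle : ∀ a, c a ≤ x a := by
      intro a
      rcases hc01 a with h | h
      · rw [h]; exact hx.1 a
      · rw [h]; exact hx1 a (by rw [h]; norm_num)
    have hcf0 : c (f 0) = 1 := by
      rcases hc01 (f 0) with h | h
      · exfalso
        have h1 : (1 : ℝ) ≤ c (f 0) := by
          rw [hc]
          have := Finset.single_le_sum
            (f := fun i : Fin (n₀ + 1) => if f i = f 0 then (1 : ℝ) else 0)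
            (fun i _ => by positivity) (Finset.mem_univ 0)
          simpa using this
        rw [h] at h1; norm_num at h1
      · exact h
    have hcsum : (1 : ℝ) ≤ ∑ a : A, c a := by
      calc (1 : ℝ) = c (f 0) := hcf0.symm
        _ ≤ ∑ a : A, c a := Finset.single_le_sum (fun a _ => hc0le a) (Finset.mem_univ (f 0))
    have hN1 : 1 ≤ N := by
      have h1 : (1 : ℝ) ≤ (N : ℝ) :=
        le_trans hcsum (le_trans (Finset.sum_le_sum fun a _ => hcle a) hsum)
      exact_mod_cast h1
    have hx'mem : (fun a => x a - c a) ∈ quiverPolyhedron s t θ := by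
      refine ⟨fun a => sub_nonneg.mpr (hcle a), fun v => ?_⟩
      rw [flowMap_sub', hx.2 v, hc, cycle_flow s t n₀ f hft v, sub_zero]
    have hx'lat : IsLatticePt (fun a => x a - c a) := by
      intro a
      obtain ⟨z, hz⟩ := hlat a
      rcases hc01 a with h | h
      · exact ⟨z, by show x a - c a = _; rw [h, hz, sub_zero]⟩
      · exact ⟨z - 1, by show x a - c a = _; rw [h, hz]; push_cast; ring⟩
    have hx'sum : (∑ a : A, (x a - c a)) ≤ ((N - 1 : ℕ) : ℝ) := by
      rw [Finset.sum_sub_distrib, Nat.cast_sub hN1]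
      push_cast
      linarith
    obtain ⟨m, nn, hm, hmlat, hnn, hnnlat, hnncyc, hxeq⟩ :=
      IH (N - 1) (by omega) (fun a => x a - c a) hx'mem hx'lat hx'sum
    refine ⟨fun a => m a + c a, nn, ⟨fun a => add_nonneg (hm.1 a) (hc0le a), fun v => ?_⟩,
      ?_, hnn, hnnlat, hnncyc, ?_⟩
    · rw [flowMap_add', hm.2 v, hc, cycle_flow s t n₀ f hft v]
      simp
    · intro a
      obtain ⟨z, hz⟩ := hmlat a
      rcases hc01 a with h | h
      · exact ⟨z, by show m a + c a = _; rw [h, hz, add_zero]⟩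
      · exact ⟨z + 1, by show m a + c a = _; rw [h, hz]; push_cast; ring⟩
    · funext a
      have h := congrFun hxeq a
      have : x a = (m a + nn a) + c a := by rw [← h]; ring
      rw [this]; ring

/-- Minkowski sum decomposition of the lattice points of `∇(Q,θ)`. -/
theorem stmt1 {V A : Type} [Fintype V] [Fintype A] [DecidableEq V] (s t : A → V)
    (θ : V → ℤ) (x : A → ℝ) :
    (x ∈ quiverPolyhedron s t θ ∧ IsLatticePt x) ↔
    ∃ (m n : A → ℝ) (E : Set A), MaximalAcyclic s t E ∧
      m ∈ quiverPolyhedron s t (fun _ => 0) ∧ IsLatticePt m ∧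
      n ∈ quiverPolyhedron s t θ ∧ IsLatticePt n ∧ (∀ a ∉ E, n a = 0) ∧
      x = m + n := by
  classical
  constructor
  · rintro ⟨hx, hlat⟩
    choose z hz using hlat
    have hsum : (∑ a : A, x a) ≤ (((∑ a : A, z a).toNat : ℕ) : ℝ) := by
      have h1 : (∑ a : A, x a) = ((∑ a : A, z a : ℤ) : ℝ) := by
        rw [Finset.sum_congr rfl fun a _ => hz a]
        push_cast
        rfl
      rw [h1]
      exact_mod_cast Int.self_le_toNat _
    obtain ⟨m, n, hm, hmlat, hn, hnlat, hncyc, hxeq⟩ :=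
      key_decomp s t θ _ x hx (fun a => ⟨z a, hz a⟩) hsum
    obtain ⟨E, hEsub, hEmax⟩ := exists_maximalAcyclic s t _ hncyc
    refine ⟨m, n, E, hEmax, hm, hmlat, hn, hnlat, fun a ha => ?_, ?_⟩
    · by_contra hna
      exact ha (hEsub hna)
    · funext a
      exact congrFun hxeq a
  · rintro ⟨m, n, E, hE, hm, hmlat, hn, hnlat, hsupp, rfl⟩
    refine ⟨⟨fun a => add_nonneg (hm.1 a) (hn.1 a), fun v => ?_⟩, fun a => ?_⟩
    · have hadd : (m + n : A → ℝ) = fun a => m a + n a := rfl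
      rw [hadd, flowMap_add', hm.2 v, hn.2 v]
      simp
    · obtain ⟨z1, h1⟩ := hmlat a
      obtain ⟨z2, h2⟩ := hnlat a
      refine ⟨z1 + z2, ?_⟩
      show m a + n a = _
      rw [h1, h2]
      push_cast
      ring
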